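/- Let M and M' be two mean-field MDPs on the same finite S, A, horizon H and initial distribution μ₁ (with possibly different transition kernels). For all policies π̃, π, π' ∈ Π and all functions f_h : S × A → [0,1] (h = 1,…,H): |E_{π̃,M(π)}[Σ_{h=1}^H f_h(s_h,a_h)] − E_{π̃,M'(π')}[Σ_{h=1}^H f_h(s_h,a_h)]| ≤ H · E_{π̃,M(π)}[Σ_{h=1}^H ‖P_{M,h}(·|s_h,a_h,μ^π_{M,h}) − P_{M',h}(·|s_h,a_h,μ^{π'}_{M',h})‖₁]. (Model Difference Lemma.) -/

import Mathlib

/-- ℓ1 distance between two functions on a finite type. -/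
def l1 {X : Type*} [Fintype X] (p q : X → ℝ) : ℝ := ∑ x, |p x - q x|

/-- A (nonstationary Markov) policy: at each step `h` (0-indexed) and state `s`,
`π h s` is a probability distribution over actions. -/
def IsPolicy {S A : Type*} [Fintype A] (π : ℕ → S → A → ℝ) : Prop :=
  ∀ h s, (∀ a, 0 ≤ π h s a) ∧ ∑ a, π h s a = 1

/-- The transition kernels of a mean-field MDP with horizon `H`:
at each step `h < H`, `P h s a μ ∈ Δ(S)` whenever `μ ∈ Δ(S)`. -/
def IsKernel {S A : Type*} [Fintype S] (H : ℕ) (P : ℕ → S → A → (S → ℝ) → S → ℝ) : Prop :=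
  ∀ h, h < H → ∀ s a (μ : S → ℝ), μ ∈ stdSimplex ℝ S → P h s a μ ∈ stdSimplex ℝ S

/-- Induced state densities: `dens P μ₁ π h = μ^π_{M,h+1}` (1-indexed step `h+1`). -/
def dens {S A : Type*} [Fintype S] [Fintype A] (P : ℕ → S → A → (S → ℝ) → S → ℝ)
    (μ₁ : S → ℝ) (π : ℕ → S → A → ℝ) : ℕ → S → ℝ
  | 0 => μ₁
  | h + 1 => fun s' => ∑ s, ∑ a, dens P μ₁ π h s * π h s a * P h s a (dens P μ₁ π h) s'

/-- The state law of executing `π̃` while the kernels are frozen at the densities induced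
by the reference policy `π` in model `M = (P, μ₁)`. -/
def densF {S A : Type*} [Fintype S] [Fintype A] (P : ℕ → S → A → (S → ℝ) → S → ℝ)
    (μ₁ : S → ℝ) (π πt : ℕ → S → A → ℝ) : ℕ → S → ℝ
  | 0 => μ₁
  | h + 1 => fun s' => ∑ s, ∑ a, densF P μ₁ π πt h s * πt h s a * P h s a (dens P μ₁ π h) s'

/-- `E_{π̃,M(π)}[Σ_{h=1}^H f_h(s_h,a_h)]`. -/
def expF {S A : Type*} [Fintype S] [Fintype A] (H : ℕ) (P : ℕ → S → A → (S → ℝ) → S → ℝ)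
    (μ₁ : S → ℝ) (π πt : ℕ → S → A → ℝ) (f : ℕ → S → A → ℝ) : ℝ :=
  ∑ h ∈ Finset.range H, ∑ s, ∑ a, densF P μ₁ π πt h s * πt h s a * f h s a

/-- The return `J_M(π̃;π)` of executing `π̃` with transitions and rewards frozen by `π`. -/
def Jret {S A : Type*} [Fintype S] [Fintype A] (H : ℕ) (P : ℕ → S → A → (S → ℝ) → S → ℝ)
    (r : ℕ → S → A → (S → ℝ) → ℝ) (μ₁ : S → ℝ) (πt π : ℕ → S → A → ℝ) : ℝ :=
  expF H P μ₁ π πt fun h s a => r h s a (dens P μ₁ π h)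

/-- One-sided conditional model distance `d^{π̃}(M,M'|π)`. -/
def dCond {S A : Type*} [Fintype S] [Fintype A] (H : ℕ)
    (P P' : ℕ → S → A → (S → ℝ) → S → ℝ) (μ₁ : S → ℝ) (π πt : ℕ → S → A → ℝ) : ℝ :=
  expF H P μ₁ π πt fun h s a => l1 (P h s a (dens P μ₁ π h)) (P' h s a (dens P' μ₁ π h))

section ModelDiffAux

variable {S A : Type*} [Fintype S] [Fintype A]

lemma l1_nonneg' {X : Type*} [Fintype X] (p q : X → ℝ) : 0 ≤ l1 p q :=
  Finset.sum_nonneg fun _ _ => abs_nonneg _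

lemma step_mem (ρ : S → ℝ) (hρ : ρ ∈ stdSimplex ℝ S) (πh : S → A → ℝ)
    (hπ : ∀ s, (∀ a, 0 ≤ πh s a) ∧ ∑ a, πh s a = 1)
    (K : S → A → S → ℝ) (hK : ∀ s a, K s a ∈ stdSimplex ℝ S) :
    (fun s' => ∑ s, ∑ a, ρ s * πh s a * K s a s') ∈ stdSimplex ℝ S := by
  obtain ⟨hρ0, hρ1⟩ := hρ
  constructor
  · intro s'
    exact Finset.sum_nonneg fun s _ => Finset.sum_nonneg fun a _ =>
      mul_nonneg (mul_nonneg (hρ0 s) ((hπ s).1 a)) ((hK s a).1 s')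
  · calc ∑ s', ∑ s, ∑ a, ρ s * πh s a * K s a s'
        = ∑ s, ∑ a, ρ s * πh s a * ∑ s', K s a s' := by
          rw [Finset.sum_comm]
          refine Finset.sum_congr rfl fun s _ => ?_
          rw [Finset.sum_comm]
          exact Finset.sum_congr rfl fun a _ => (Finset.mul_sum _ _ _).symm
      _ = ∑ s, ρ s * ∑ a, πh s a := by
          refine Finset.sum_congr rfl fun s _ => ?_
          rw [Finset.mul_sum]
          exact Finset.sum_congr rfl fun a _ => by rw [(hK s a).2, mul_one]
      _ = 1 := by
          rw [← hρ1]
          exact Finset.sum_congr rfl fun s _ => by rw [(hπ s).2, mul_one]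

lemma l1_step (ρ ρ' : S → ℝ) (hρ0 : ∀ s, 0 ≤ ρ s) (πh : S → A → ℝ)
    (hπ : ∀ s, (∀ a, 0 ≤ πh s a) ∧ ∑ a, πh s a = 1)
    (K K' : S → A → S → ℝ) (hK' : ∀ s a, K' s a ∈ stdSimplex ℝ S) :
    l1 (fun s' => ∑ s, ∑ a, ρ s * πh s a * K s a s')
       (fun s' => ∑ s, ∑ a, ρ' s * πh s a * K' s a s')
    ≤ l1 ρ ρ' + ∑ s, ∑ a, ρ s * πh s a * l1 (K s a) (K' s a) := by
  have key : ∀ s', |(∑ s, ∑ a, ρ s * πh s a * K s a s') - ∑ s, ∑ a, ρ' s * πh s a * K' s a s'|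
      ≤ (∑ s, ∑ a, |ρ s - ρ' s| * πh s a * K' s a s')
        + ∑ s, ∑ a, ρ s * πh s a * |K s a s' - K' s a s'| := by
    intro s'
    rw [← Finset.sum_sub_distrib, ← Finset.sum_add_distrib]
    refine (Finset.abs_sum_le_sum_abs _ _).trans (Finset.sum_le_sum fun s _ => ?_)
    rw [← Finset.sum_sub_distrib, ← Finset.sum_add_distrib]
    refine (Finset.abs_sum_le_sum_abs _ _).trans (Finset.sum_le_sum fun a _ => ?_)
    have heq : ρ s * πh s a * K s a s' - ρ' s * πh s a * K' s a s'
        = (ρ s - ρ' s) * πh s a * K' s a s' + ρ s * πh s a * (K s a s' - K' s a s') := by ring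
    rw [heq]
    refine (abs_add_le _ _).trans (add_le_add ?_ ?_)
    · rw [abs_mul, abs_mul, abs_of_nonneg ((hπ s).1 a), abs_of_nonneg ((hK' s a).1 s')]
    · rw [abs_mul, abs_mul, abs_of_nonneg (hρ0 s), abs_of_nonneg ((hπ s).1 a)]
  unfold l1
  refine (Finset.sum_le_sum fun s' _ => key s').trans ?_
  rw [Finset.sum_add_distrib]
  refine add_le_add ?_ (le_of_eq ?_)
  · -- ∑ s', ∑ s, ∑ a, |ρ-ρ'| πh K' = ∑ s |ρ-ρ'| ≤ l1 ρ ρ' (equality)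
    have : ∑ s', ∑ s, ∑ a, |ρ s - ρ' s| * πh s a * K' s a s'
        = ∑ s, |ρ s - ρ' s| := by
      rw [Finset.sum_comm]
      refine Finset.sum_congr rfl fun s _ => ?_
      rw [Finset.sum_comm]
      calc ∑ a, ∑ s', |ρ s - ρ' s| * πh s a * K' s a s'
          = ∑ a, |ρ s - ρ' s| * πh s a := by
            refine Finset.sum_congr rfl fun a _ => ?_
            rw [← Finset.mul_sum, (hK' s a).2, mul_one]
        _ = |ρ s - ρ' s| := by rw [← Finset.mul_sum, (hπ s).2, mul_one]
    rw [this]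
  · rw [Finset.sum_comm]
    refine Finset.sum_congr rfl fun s _ => ?_
    rw [Finset.sum_comm]
    refine Finset.sum_congr rfl fun a _ => ?_
    rw [Finset.mul_sum]

lemma dens_mem (H : ℕ) (P : ℕ → S → A → (S → ℝ) → S → ℝ) (μ₁ : S → ℝ)
    (hμ₁ : μ₁ ∈ stdSimplex ℝ S) (hP : IsKernel H P) (π : ℕ → S → A → ℝ)
    (hπ : IsPolicy π) : ∀ h, h ≤ H → dens P μ₁ π h ∈ stdSimplex ℝ S := by
  intro h
  induction h with
  | zero => intro _; exact hμ₁
  | succ h ih =>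
    intro hh
    have hm := ih (Nat.le_of_succ_le hh)
    exact step_mem _ hm _ (hπ h) _ fun s a => hP h (Nat.lt_of_succ_le hh) s a _ hm

lemma densF_mem (H : ℕ) (P : ℕ → S → A → (S → ℝ) → S → ℝ) (μ₁ : S → ℝ)
    (hμ₁ : μ₁ ∈ stdSimplex ℝ S) (hP : IsKernel H P) (π πt : ℕ → S → A → ℝ)
    (hπ : IsPolicy π) (hπt : IsPolicy πt) :
    ∀ h, h ≤ H → densF P μ₁ π πt h ∈ stdSimplex ℝ S := by
  intro h
  induction h with
  | zero => intro _; exact hμ₁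
  | succ h ih =>
    intro hh
    have hm := dens_mem H P μ₁ hμ₁ hP π hπ h (Nat.le_of_succ_le hh)
    exact step_mem _ (ih (Nat.le_of_succ_le hh)) _ (hπt h) _
      fun s a => hP h (Nat.lt_of_succ_le hh) s a _ hm

end ModelDiffAux

/-- **Model Difference Lemma.** For any two mean-field MDPs `M, M'`, policies
`π̃, π, π'` and step-wise functions `f_h` with values in `[0,1]`:
`|E_{π̃,M(π)}[Σ f] − E_{π̃,M'(π')}[Σ f]| ≤ H · E_{π̃,M(π)}[Σ_h ‖P_{M,h}(·|s,a,μ^π_{M,h}) − P_{M',h}(·|s,a,μ^{π'}_{M',h})‖₁]`. -/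
theorem model_difference_lemma {S A : Type*} [Fintype S] [Fintype A] (H : ℕ)
    (P P' : ℕ → S → A → (S → ℝ) → S → ℝ) (μ₁ : S → ℝ) (hμ₁ : μ₁ ∈ stdSimplex ℝ S)
    (hP : IsKernel H P) (hP' : IsKernel H P')
    (πt π π' : ℕ → S → A → ℝ) (hπt : IsPolicy πt) (hπ : IsPolicy π) (hπ' : IsPolicy π')
    (f : ℕ → S → A → ℝ) (hf : ∀ h, h < H → ∀ s a, f h s a ∈ Set.Icc (0 : ℝ) 1) :
    |expF H P μ₁ π πt f - expF H P' μ₁ π' πt f| ≤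
      H * expF H P μ₁ π πt (fun h s a =>
        l1 (P h s a (dens P μ₁ π h)) (P' h s a (dens P' μ₁ π' h))) := by
  set ν := densF P μ₁ π πt with hν
  set ν' := densF P' μ₁ π' πt with hν'
  set D : ℕ → ℝ := (fun h => ∑ s, ∑ a, ν h s * πt h s a *
      l1 (P h s a (dens P μ₁ π h)) (P' h s a (dens P' μ₁ π' h))) with hDdef
  have hD0 : ∀ h, h ≤ H → 0 ≤ D h := fun h hh =>
    Finset.sum_nonneg fun s _ => Finset.sum_nonneg fun a _ =>
      mul_nonneg (mul_nonneg ((densF_mem H P μ₁ hμ₁ hP π πt hπ hπt h hh).1 s)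
        ((hπt h s).1 a)) (l1_nonneg' _ _)
  have hl1 : ∀ h, h ≤ H → l1 (ν h) (ν' h) ≤ ∑ k ∈ Finset.range h, D k := by
    intro h
    induction h with
    | zero =>
      intro _
      simp [l1, hν, hν', densF]
    | succ h ih =>
      intro hh
      have hhH := Nat.le_of_succ_le hh
      have hstep := l1_step (ν h) (ν' h)
        (densF_mem H P μ₁ hμ₁ hP π πt hπ hπt h hhH).1 (πt h) (hπt h)
        (fun s a => P h s a (dens P μ₁ π h)) (fun s a => P' h s a (dens P' μ₁ π' h))
        (fun s a => hP' h (Nat.lt_of_succ_le hh) s a _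
          (dens_mem H P' μ₁ hμ₁ hP' π' hπ' h hhH))
      rw [Finset.sum_range_succ]
      calc l1 (ν (h+1)) (ν' (h+1)) ≤ l1 (ν h) (ν' h) + D h := hstep
        _ ≤ (∑ k ∈ Finset.range h, D k) + D h := add_le_add_left (ih hhH) _
  have hmain : |expF H P μ₁ π πt f - expF H P' μ₁ π' πt f|
      ≤ ∑ h ∈ Finset.range H, l1 (ν h) (ν' h) := by
    unfold expF
    rw [← Finset.sum_sub_distrib]
    refine (Finset.abs_sum_le_sum_abs _ _).trans (Finset.sum_le_sum fun h hh => ?_)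
    rw [Finset.mem_range] at hh
    rw [← Finset.sum_sub_distrib]
    refine (Finset.abs_sum_le_sum_abs _ _).trans ?_
    unfold l1
    refine Finset.sum_le_sum fun s _ => ?_
    rw [← Finset.sum_sub_distrib]
    refine (Finset.abs_sum_le_sum_abs _ _).trans ?_
    calc ∑ a, |ν h s * πt h s a * f h s a - ν' h s * πt h s a * f h s a|
        ≤ ∑ a, |ν h s - ν' h s| * πt h s a := by
          refine Finset.sum_le_sum fun a _ => ?_
          have heq : ν h s * πt h s a * f h s a - ν' h s * πt h s a * f h s a
              = (ν h s - ν' h s) * πt h s a * f h s a := by ring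
          rw [heq, abs_mul, abs_mul, abs_of_nonneg ((hπt h s).1 a)]
          have hfa := hf h hh s a
          have hfb : |f h s a| ≤ 1 := abs_le.mpr ⟨by linarith [hfa.1], hfa.2⟩
          calc |ν h s - ν' h s| * πt h s a * |f h s a|
              ≤ |ν h s - ν' h s| * πt h s a * 1 :=
                mul_le_mul_of_nonneg_left hfb (mul_nonneg (abs_nonneg _) ((hπt h s).1 a))
            _ = _ := mul_one _
      _ = |ν h s - ν' h s| := by rw [← Finset.mul_sum, (hπt h s).2, mul_one]
  refine hmain.trans ?_
  have hrhs : expF H P μ₁ π πt (fun h s a =>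
      l1 (P h s a (dens P μ₁ π h)) (P' h s a (dens P' μ₁ π' h)))
      = ∑ h ∈ Finset.range H, D h := rfl
  rw [hrhs]
  calc ∑ h ∈ Finset.range H, l1 (ν h) (ν' h)
      ≤ ∑ _h ∈ Finset.range H, ∑ k ∈ Finset.range H, D k := by
        refine Finset.sum_le_sum fun h hh => ?_
        rw [Finset.mem_range] at hh
        refine (hl1 h hh.le).trans ?_
        exact Finset.sum_le_sum_of_subset_of_nonneg
          (Finset.range_subset_range.mpr hh.le)
          (fun k hk _ => hD0 k (Finset.mem_range.mp hk).le)
    _ = H * ∑ k ∈ Finset.range H, D k := by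
        rw [Finset.sum_const, Finset.card_range, nsmul_eq_mul]
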